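/- arXiv:1507.02011 — 2 statements merged into one kernel-verified Lean document; each statement's English description precedes it below -/
import Mathlib

section
/- With λ_i = 1/(θ·E[g_i(x,y)]) for each i (the minimizer of the expected loss E[θ∑_i λ_i g_i(x,y) − ∑_i log λ_i]), the misclassification probability of the ensemble prediction rule satisfies, for every p > 1: P(error) ≤ m^{1/p} · ( E[ ( ∑_{i=1}^m g_i(x,−y) / E[g_i(x,y)] )^{−1/(p−1)} ] )^{(p−1)/p}, where the 'error' event is {(x,y) : y · ∑_{i=1}^m λ_i (g_i(x,−1) − g_i(x,1)) < 0}. -/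
open MeasureTheory

/-- Theorem 3 (prediction error bound): with the expected-loss-minimizing weights
`λᵢ = 1/(θ·E[gᵢ(x,y)])`, for every `p > 1`,
`P(error) ≤ m^{1/p} · (E[(∑ᵢ gᵢ(x,−y)/E[gᵢ(x,y)])^{−1/(p−1)}])^{(p−1)/p}`
in the extended nonnegative reals, where the error event is
`{(x,y) : y · ∑ᵢ λᵢ (gᵢ(x,−1) − gᵢ(x,1)) < 0}`. -/
theorem stmt4 {Ω 𝒳 : Type*} [MeasurableSpace Ω] [MeasurableSpace 𝒳]
    (P : Measure Ω) [IsProbabilityMeasure P]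
    (ξ : Ω → 𝒳) (hξ : Measurable ξ)
    (y : Ω → ℝ) (hy : Measurable y) (hy1 : ∀ ω, y ω = 1 ∨ y ω = -1)
    {m : ℕ} (g : Fin m → 𝒳 → ℝ → ℝ)
    (hgmeas : ∀ i, Measurable (Function.uncurry (g i)))
    (hgpos : ∀ i x s, 0 < g i x s)
    (θ : ℝ) (hθ : 0 < θ)
    (μ : Fin m → ℝ) (hμint : ∀ i, Integrable (fun ω => g i (ξ ω) (y ω)) P)
    (hμ : ∀ i, μ i = ∫ ω, g i (ξ ω) (y ω) ∂P) (hμpos : ∀ i, 0 < μ i)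
    (lam : Fin m → ℝ) (hlamdef : ∀ i, lam i = 1 / (θ * μ i))
    (p : ℝ) (hp : 1 < p) :
    P {ω : Ω | y ω * ∑ i, lam i * (g i (ξ ω) (-1) - g i (ξ ω) 1) < 0}
      ≤ (m : ENNReal) ^ (1 / p) *
        (∫⁻ ω, (ENNReal.ofReal (∑ i, g i (ξ ω) (-(y ω)) / μ i)) ^ (-1 / (p - 1)) ∂P) ^
          ((p - 1) / p) := by
  have hp0 : 0 < p := lt_trans one_pos hp
  rcases Nat.eq_zero_or_pos m with hm | hm
  · subst hm
    have he : {ω : Ω | y ω * ∑ i, lam i * (g i (ξ ω) (-1) - g i (ξ ω) 1) < 0} = ∅ := by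
      ext ω; simp
    rw [he, measure_empty]
    exact zero_le
  have hp1 : 0 < p - 1 := sub_pos.mpr hp
  set q : ℝ := p / (p - 1) with hq
  have hpq : p.HolderConjugate q := Real.HolderConjugate.conjExponent hp
  set T : Ω → ℝ := fun ω => ∑ i, g i (ξ ω) (y ω) / μ i with hT
  set S : Ω → ℝ := fun ω => ∑ i, g i (ξ ω) (-(y ω)) / μ i with hS
  -- measurability helpers
  have hgm : ∀ (i : Fin m) (c : Ω → ℝ), Measurable c →
      Measurable (fun ω => g i (ξ ω) (c ω)) := fun i c hc =>
    (hgmeas i).comp (hξ.prodMk hc)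
  have hmeasT : Measurable T := Finset.measurable_sum _ fun i _ =>
    (hgm i y hy).div_const _
  have hmeasS : Measurable S := Finset.measurable_sum _ fun i _ =>
    (hgm i (fun ω => -(y ω)) hy.neg).div_const _
  -- positivity
  have hSpos : ∀ ω, 0 < S ω := fun ω =>
    Finset.sum_pos (fun i _ => div_pos (hgpos i _ _) (hμpos i))
      (Finset.univ_nonempty_iff.mpr (Fin.pos_iff_nonempty.mp hm))
  -- on the error set, S < T
  have hST : ∀ ω, ω ∈ {ω : Ω | y ω * ∑ i, lam i * (g i (ξ ω) (-1) - g i (ξ ω) 1) < 0} →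
      S ω < T ω := by
    intro ω hω
    simp only [Set.mem_setOf_eq] at hω
    have key : θ * ∑ i, lam i * (g i (ξ ω) (-1) - g i (ξ ω) 1)
        = ∑ i, (g i (ξ ω) (-1) - g i (ξ ω) 1) / μ i := by
      rw [Finset.mul_sum]
      refine Finset.sum_congr rfl fun i _ => ?_
      rw [hlamdef i]
      have h1 : θ ≠ 0 := hθ.ne'
      have h2 : μ i ≠ 0 := (hμpos i).ne'
      field_simp
    rcases hy1 ω with h1 | h1
    · rw [h1, one_mul] at hω
      have : ∑ i, (g i (ξ ω) (-1) - g i (ξ ω) 1) / μ i < 0 := by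
        rw [← key]; exact mul_neg_of_pos_of_neg hθ hω
      have hlt : ∑ i, g i (ξ ω) (-1) / μ i < ∑ i, g i (ξ ω) 1 / μ i := by
        have := this
        simp only [sub_div, Finset.sum_sub_distrib] at this
        linarith
      simp only [hS, hT, h1]
      simpa using hlt
    · rw [h1] at hω
      have hpos : 0 < ∑ i, lam i * (g i (ξ ω) (-1) - g i (ξ ω) 1) := by nlinarith
      have : 0 < ∑ i, (g i (ξ ω) (-1) - g i (ξ ω) 1) / μ i := by
        rw [← key]; positivity
      have hlt : ∑ i, g i (ξ ω) 1 / μ i < ∑ i, g i (ξ ω) (-1) / μ i := by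
        simp only [sub_div, Finset.sum_sub_distrib] at this
        linarith
      simp only [hS, hT, h1]
      simpa using hlt
  -- define Hölder factors
  set f : Ω → ENNReal := fun ω => ENNReal.ofReal (T ω) ^ (1 / p) with hf
  set h : Ω → ENNReal := fun ω => ENNReal.ofReal (S ω) ^ (-(1 / p)) with hhdef
  have hE : MeasurableSet {ω : Ω | y ω * ∑ i, lam i * (g i (ξ ω) (-1) - g i (ξ ω) 1) < 0} := by
    have : Measurable (fun ω => y ω * ∑ i, lam i * (g i (ξ ω) (-1) - g i (ξ ω) 1)) := by
      exact hy.mul (Finset.measurable_sum _ fun i _ =>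
        ((hgm i (fun _ => (-1 : ℝ)) measurable_const).sub
          (hgm i (fun _ => (1 : ℝ)) measurable_const)).const_mul _)
    exact measurableSet_lt this measurable_const
  -- step 1: P(E) ≤ ∫ f * h
  have step1 : P {ω : Ω | y ω * ∑ i, lam i * (g i (ξ ω) (-1) - g i (ξ ω) 1) < 0}
      ≤ ∫⁻ ω, (f * h) ω ∂P := by
    rw [← lintegral_indicator_one hE]
    refine lintegral_mono fun ω => ?_
    by_cases hω : ω ∈ {ω : Ω | y ω * ∑ i, lam i * (g i (ξ ω) (-1) - g i (ξ ω) 1) < 0}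
    · rw [Set.indicator_of_mem hω]
      have hSlt := hST ω hω
      have hb0 : ENNReal.ofReal (S ω) ≠ 0 := by
        simp [ENNReal.ofReal_eq_zero, not_le, hSpos ω]
      have hbt : ENNReal.ofReal (S ω) ≠ ⊤ := ENNReal.ofReal_ne_top
      have h1 : (1 : ENNReal) = ENNReal.ofReal (S ω) ^ (1/p) *
          ENNReal.ofReal (S ω) ^ (-(1/p)) := by
        rw [← ENNReal.rpow_add _ _ hb0 hbt]
        simp
      simp only [Pi.mul_apply, Pi.one_apply, hf, hhdef]
      rw [h1]
      refine mul_le_mul_left ?_ _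
      exact ENNReal.rpow_le_rpow (ENNReal.ofReal_le_ofReal hSlt.le)
        (by positivity)
    · rw [Set.indicator_of_notMem hω]; exact zero_le
  -- step 2: Hölder
  have hfmeas : AEMeasurable f P :=
    ((ENNReal.measurable_ofReal.comp hmeasT).pow_const _).aemeasurable
  have hhmeas : AEMeasurable h P :=
    ((ENNReal.measurable_ofReal.comp hmeasS).pow_const _).aemeasurable
  have step2 := ENNReal.lintegral_mul_le_Lp_mul_Lq P hpq hfmeas hhmeas
  -- evaluate ∫ f^p
  have hTint : Integrable T P := integrable_finset_sum _ fun i _ => (hμint i).div_const _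
  have hTnn : 0 ≤ᵐ[P] T := Filter.Eventually.of_forall fun ω =>
    Finset.sum_nonneg fun i _ => div_nonneg (hgpos i _ _).le (hμpos i).le
  have hintT : ∫ ω, T ω ∂P = (m : ℝ) := by
    rw [hT, integral_finset_sum _ fun i _ => (hμint i).div_const _]
    have : ∀ i : Fin m, ∫ ω, g i (ξ ω) (y ω) / μ i ∂P = 1 := by
      intro i
      rw [integral_div, ← hμ i, div_self (hμpos i).ne']
    simp [this]
  have hfp : ∫⁻ ω, f ω ^ p ∂P = (m : ENNReal) := by
    have : ∀ ω, f ω ^ p = ENNReal.ofReal (T ω) := by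
      intro ω
      rw [hf, ← ENNReal.rpow_mul, one_div, inv_mul_cancel₀ hp0.ne', ENNReal.rpow_one]
    simp_rw [this]
    rw [← ofReal_integral_eq_lintegral_ofReal hTint hTnn, hintT, ENNReal.ofReal_natCast]
  -- evaluate h^q
  have hhq : ∀ ω, h ω ^ q = ENNReal.ofReal (S ω) ^ (-1 / (p - 1)) := by
    intro ω
    rw [hhdef, ← ENNReal.rpow_mul]
    congr 1
    have h1 : p ≠ 0 := hp0.ne'
    have h2 : p - 1 ≠ 0 := hp1.ne'
    rw [hq]
    field_simp
  have h1q : 1 / q = (p - 1) / p := by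
    rw [hq, one_div_div]
  calc P {ω : Ω | y ω * ∑ i, lam i * (g i (ξ ω) (-1) - g i (ξ ω) 1) < 0}
      ≤ ∫⁻ ω, (f * h) ω ∂P := step1
    _ ≤ (∫⁻ ω, f ω ^ p ∂P) ^ (1 / p) * (∫⁻ ω, h ω ^ q ∂P) ^ (1 / q) := step2
    _ = (m : ENNReal) ^ (1 / p) *
        (∫⁻ ω, (ENNReal.ofReal (∑ i, g i (ξ ω) (-(y ω)) / μ i)) ^ (-1 / (p - 1)) ∂P) ^
          ((p - 1) / p) := by
        rw [hfp, h1q]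
        congr 1
        congr 1
        exact lintegral_congr fun ω => hhq ω
end

section
/- For any nonnegative weights λ_1, …, λ_m (not all zero) such that ∑_{i=1}^m λ_i g_i(x,−y) > 0 almost surely, and any p > 1, the misclassification probability of the ensemble prediction rule satisfies P(error) ≤ ( E[ ∑_{i=1}^m λ_i g_i(x,y) ] )^{1/p} · ( E[ ( ∑_{i=1}^m λ_i g_i(x,−y) )^{−1/(p−1)} ] )^{(p−1)/p}, where the 'error' event is {(x,y) : y · ∑_{i=1}^m λ_i (g_i(x,−1) − g_i(x,1)) < 0}. -/
open MeasureTheory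
open scoped ENNReal

/-- Prediction error bound for arbitrary nonnegative weights (not all zero) with
`∑ᵢ λᵢ gᵢ(x,−y) > 0` a.s.: for every `p > 1`,
`P(error) ≤ (E[∑ᵢ λᵢ gᵢ(x,y)])^{1/p} · (E[(∑ᵢ λᵢ gᵢ(x,−y))^{−1/(p−1)}])^{(p−1)/p}`
in the extended nonnegative reals. -/
theorem stmt5 {Ω 𝒳 : Type*} [MeasurableSpace Ω] [MeasurableSpace 𝒳]
    (P : Measure Ω) [IsProbabilityMeasure P]
    (ξ : Ω → 𝒳) (hξ : Measurable ξ)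
    (y : Ω → ℝ) (hy : Measurable y) (hy1 : ∀ ω, y ω = 1 ∨ y ω = -1)
    {m : ℕ} (g : Fin m → 𝒳 → ℝ → ℝ)
    (hgmeas : ∀ i, Measurable (Function.uncurry (g i)))
    (hgnonneg : ∀ i x s, 0 ≤ g i x s)
    (lam : Fin m → ℝ) (hlam : ∀ i, 0 ≤ lam i) (hlamne : ∃ i, lam i ≠ 0)
    (hpos : ∀ᵐ ω ∂P, 0 < ∑ i, lam i * g i (ξ ω) (-(y ω)))
    (p : ℝ) (hp : 1 < p) :
    P {ω : Ω | y ω * ∑ i, lam i * (g i (ξ ω) (-1) - g i (ξ ω) 1) < 0}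
      ≤ (∫⁻ ω, ENNReal.ofReal (∑ i, lam i * g i (ξ ω) (y ω)) ∂P) ^ (1 / p) *
        (∫⁻ ω, (ENNReal.ofReal (∑ i, lam i * g i (ξ ω) (-(y ω)))) ^ (-1 / (p - 1)) ∂P) ^
          ((p - 1) / p) := by
  set F : Ω → ℝ := fun ω => ∑ i, lam i * g i (ξ ω) (y ω) with hF
  set G : Ω → ℝ := fun ω => ∑ i, lam i * g i (ξ ω) (-(y ω)) with hG
  have hFmeas : Measurable F := by
    apply Finset.measurable_sum
    intro i _
    exact ((hgmeas i).comp (hξ.prodMk hy)).const_mul _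
  have hGmeas : Measurable G := by
    apply Finset.measurable_sum
    intro i _
    exact ((hgmeas i).comp (hξ.prodMk hy.neg)).const_mul _
  set oF : Ω → ℝ≥0∞ := fun ω => ENNReal.ofReal (F ω) with hoF
  set oG : Ω → ℝ≥0∞ := fun ω => ENNReal.ofReal (G ω) with hoG
  have hoFmeas : Measurable oF := hFmeas.ennreal_ofReal
  have hoGmeas : Measurable oG := hGmeas.ennreal_ofReal
  set h : Ω → ℝ≥0∞ := fun ω => oF ω ^ (1/p) * oG ω ^ (-1/p) with hh
  have hp0 : (0:ℝ) < p := lt_trans one_pos hp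
  have hpm1 : (0:ℝ) < p - 1 := by linarith
  -- error implies F > G
  have key : ∀ ω, y ω * ∑ i, lam i * (g i (ξ ω) (-1) - g i (ξ ω) 1) < 0 → G ω < F ω := by
    intro ω hω
    have hsum : ∑ i, lam i * (g i (ξ ω) (-1) - g i (ξ ω) 1)
        = (∑ i, lam i * g i (ξ ω) (-1)) - ∑ i, lam i * g i (ξ ω) 1 := by
      rw [← Finset.sum_sub_distrib]; congr 1; ext i; ring
    rcases hy1 ω with h1 | h1 <;> rw [h1] at hω <;> simp [hF, hG, h1, hsum] at * <;> linarith
  -- a.e., error set is contained in {ω | 1 ≤ h ω}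
  have hsub : ∀ᵐ ω ∂P, ω ∈ {ω : Ω | y ω * ∑ i, lam i * (g i (ξ ω) (-1) - g i (ξ ω) 1) < 0}
      → (1:ℝ≥0∞) ≤ h ω := by
    filter_upwards [hpos] with ω hGpos hω
    have hGF := key ω hω
    have hoGne : oG ω ≠ 0 := by
      simp only [hoG, hG, ne_eq, ENNReal.ofReal_eq_zero, not_le]; exact hGpos
    have hoGtop : oG ω ≠ ⊤ := ENNReal.ofReal_ne_top
    have h1 : oG ω ^ (1/p) ≤ oF ω ^ (1/p) := by
      apply ENNReal.rpow_le_rpow _ (by positivity)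
      exact ENNReal.ofReal_le_ofReal hGF.le
    calc (1:ℝ≥0∞) = oG ω ^ (1/p) * oG ω ^ (-1/p) := by
          rw [← ENNReal.rpow_add _ _ hoGne hoGtop]
          have : 1/p + -1/p = 0 := by ring
          rw [this, ENNReal.rpow_zero]
      _ ≤ h ω := by
          apply mul_le_mul_left h1
  -- reduce to lintegral of h
  have step1 : P {ω : Ω | y ω * ∑ i, lam i * (g i (ξ ω) (-1) - g i (ξ ω) 1) < 0}
      ≤ ∫⁻ ω, h ω ∂P := by
    have hle : P {ω : Ω | y ω * ∑ i, lam i * (g i (ξ ω) (-1) - g i (ξ ω) 1) < 0}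
        ≤ P {ω | 1 ≤ h ω} := measure_mono_ae hsub
    refine hle.trans ?_
    have hhm : Measurable h := (hoFmeas.pow_const (1/p)).mul (hoGmeas.pow_const (-1/p))
    have := mul_meas_ge_le_lintegral₀ (μ := P) (f := h) hhm.aemeasurable 1
    simpa using this
  refine step1.trans ?_
  -- Hölder
  have hpq : p.HolderConjugate (p / (p - 1)) := Real.HolderConjugate.conjExponent hp
  have holder := ENNReal.lintegral_mul_le_Lp_mul_Lq P hpq
    (f := fun ω => oF ω ^ (1/p)) (g := fun ω => oG ω ^ (-1/p))
    ((hoFmeas.pow_const (1/p)).aemeasurable) ((hoGmeas.pow_const (-1/p)).aemeasurable)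
  refine holder.trans ?_
  have e1 : ∀ ω, (oF ω ^ (1/p)) ^ p = oF ω := by
    intro ω
    rw [← ENNReal.rpow_mul, one_div_mul_cancel (ne_of_gt hp0), ENNReal.rpow_one]
  have e2 : ∀ ω, (oG ω ^ (-1/p)) ^ (p/(p-1)) = oG ω ^ (-1/(p-1)) := by
    intro ω
    rw [← ENNReal.rpow_mul]
    congr 1
    field_simp
  have e3 : 1 / (p / (p - 1)) = (p - 1) / p := by
    field_simp
  simp only [e1, e2, e3]
  exact le_refl _
end
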